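/- arXiv:2504.21811 — 6 statements merged into one kernel-verified Lean document; each statement's English description precedes it below -/
import Mathlib

section
/- Let M be a set and let δ be a metric on X = M × [1, ∞) satisfying: (i) |t − t′| ≤ δ((x, t), (x′, t′)) for all x, x′ ∈ M and t, t′ ≥ 1, and (ii) δ((x, t), (x, t′)) ≤ |t − t′| for all x ∈ M, t, t′ ≥ 1. Suppose A₁, A₂ ⊆ [1, ∞) satisfy A₁ ∪ A₂ = [1, ∞) and form an excisive pair, i.e. for every r > 0 there exists R > 0 such that N_r(A₁) ∩ N_r(A₂) ⊆ N_R(A₁ ∩ A₂) (neighbourhoods in [1,∞)). Then M × A₁ and M × A₂ form an excisive pair in (X, δ): for every r > 0 there is R′ > 0 with N_r(M × A₁) ∩ N_r(M × A₂) ⊆ N_{R′}(M × (A₁ ∩ A₂)). -/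
theorem warped_product_excisive {M : Type*}
    (δ : (M × {t : ℝ // 1 ≤ t}) → (M × {t : ℝ // 1 ≤ t}) → ℝ)
    (hzero : ∀ p, δ p p = 0)
    (hsep : ∀ p q, δ p q = 0 → p = q)
    (hsymm : ∀ p q, δ p q = δ q p)
    (htri : ∀ p q r, δ p r ≤ δ p q + δ q r)
    (hlow : ∀ (x x' : M) (t t' : {t : ℝ // 1 ≤ t}), |t.1 - t'.1| ≤ δ (x, t) (x', t'))
    (hup : ∀ (x : M) (t t' : {t : ℝ // 1 ≤ t}), δ (x, t) (x, t') ≤ |t.1 - t'.1|)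
    (A₁ A₂ : Set {t : ℝ // 1 ≤ t})
    (hcover : A₁ ∪ A₂ = Set.univ)
    (hex : ∀ r > (0 : ℝ), ∃ R > (0 : ℝ), ∀ t : {t : ℝ // 1 ≤ t},
      (∃ a ∈ A₁, |t.1 - a.1| < r) → (∃ a ∈ A₂, |t.1 - a.1| < r) →
      ∃ a ∈ A₁ ∩ A₂, |t.1 - a.1| < R) :
    ∀ r > (0 : ℝ), ∃ R' > (0 : ℝ), ∀ p : M × {t : ℝ // 1 ≤ t},
      (∃ q : M × {t : ℝ // 1 ≤ t}, q.2 ∈ A₁ ∧ δ p q < r) →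
      (∃ q : M × {t : ℝ // 1 ≤ t}, q.2 ∈ A₂ ∧ δ p q < r) →
      ∃ q : M × {t : ℝ // 1 ≤ t}, q.2 ∈ A₁ ∩ A₂ ∧ δ p q < R' := by
  intro r hr
  obtain ⟨R, hR, hRspec⟩ := hex r hr
  refine ⟨R, hR, ?_⟩
  rintro ⟨x, t⟩ ⟨⟨y₁, t₁⟩, h₁, hd₁⟩ ⟨⟨y₂, t₂⟩, h₂, hd₂⟩
  obtain ⟨a, ha, haR⟩ := hRspec t
    ⟨t₁, h₁, lt_of_le_of_lt (hlow x y₁ t t₁) hd₁⟩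
    ⟨t₂, h₂, lt_of_le_of_lt (hlow x y₂ t t₂) hd₂⟩
  exact ⟨(x, a), ha, lt_of_le_of_lt (hup x t a) haR⟩
end

section
/- Let I₁ = ⋃_{n ∈ ℕ} [2^{2n}, 2^{2n+1}] and I₂ = ⋃_{n ∈ ℕ} [2^{2n+1}, 2^{2n+2}], both subsets of [1, ∞). Then for every x ∈ [1, ∞), dist(x, {2^k : k ≥ 1}) ≤ max(dist(x, I₁), dist(x, I₂)). In particular, I₁ and I₂ form an excisive pair in [1, ∞) with I₁ ∩ I₂ = {2^k : k ≥ 1}. -/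
open Metric Set

private lemma tp_le {a b : ℕ} (h : a ≤ b) : (2:ℝ)^a ≤ 2^b :=
  pow_le_pow_right₀ one_le_two h

private lemma tp_le_iff {a b : ℕ} : (2:ℝ)^a ≤ 2^b ↔ a ≤ b :=
  pow_le_pow_iff_right₀ one_lt_two

private lemma exists_pow_sandwich {x : ℝ} (hx : 1 ≤ x) :
    ∃ m : ℕ, (2:ℝ)^m ≤ x ∧ x ≤ 2^(m+1) := by
  obtain ⟨N, hN⟩ := pow_unbounded_of_one_lt x (one_lt_two (α := ℝ))
  induction N with
  | zero => simp at hN; linarith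
  | succ n ih =>
    by_cases h : x < 2^n
    · exact ih h
    · exact ⟨n, le_of_not_gt h, hN.le⟩

private lemma le_infDist' {x c : ℝ} {s : Set ℝ} (hs : s.Nonempty)
    (h : ∀ y ∈ s, c ≤ dist x y) : c ≤ infDist x s := by
  by_contra hc
  push_neg at hc
  obtain ⟨y, hy, hd⟩ := (Metric.infDist_lt_iff hs).mp hc
  exact absurd (h y hy) (not_le.mpr hd)

theorem exp_intervals_excisive :
    (⋃ n : ℕ, Set.Icc ((2 : ℝ) ^ (2 * n)) ((2 : ℝ) ^ (2 * n + 1))) ∩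
      (⋃ n : ℕ, Set.Icc ((2 : ℝ) ^ (2 * n + 1)) ((2 : ℝ) ^ (2 * n + 2))) =
      {y : ℝ | ∃ k : ℕ, 1 ≤ k ∧ y = 2 ^ k} ∧
    ∀ x ∈ Set.Ici (1 : ℝ),
      Metric.infDist x {y : ℝ | ∃ k : ℕ, 1 ≤ k ∧ y = 2 ^ k} ≤
        max (Metric.infDist x (⋃ n : ℕ, Set.Icc ((2 : ℝ) ^ (2 * n)) ((2 : ℝ) ^ (2 * n + 1))))
          (Metric.infDist x (⋃ n : ℕ, Set.Icc ((2 : ℝ) ^ (2 * n + 1)) ((2 : ℝ) ^ (2 * n + 2)))) := by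
  set I1 := ⋃ n : ℕ, Set.Icc ((2 : ℝ) ^ (2 * n)) ((2 : ℝ) ^ (2 * n + 1)) with hI1
  set I2 := ⋃ n : ℕ, Set.Icc ((2 : ℝ) ^ (2 * n + 1)) ((2 : ℝ) ^ (2 * n + 2)) with hI2
  set P := {y : ℝ | ∃ k : ℕ, 1 ≤ k ∧ y = (2:ℝ) ^ k} with hP
  have hI1mem : ∀ n : ℕ, ∀ y : ℝ, (2:ℝ)^(2*n) ≤ y → y ≤ 2^(2*n+1) → y ∈ I1 := by
    intro n y h1 h2
    exact Set.mem_iUnion.2 ⟨n, h1, h2⟩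
  have hI2mem : ∀ n : ℕ, ∀ y : ℝ, (2:ℝ)^(2*n+1) ≤ y → y ≤ 2^(2*n+2) → y ∈ I2 := by
    intro n y h1 h2
    exact Set.mem_iUnion.2 ⟨n, h1, h2⟩
  have hI2ne : I2.Nonempty := ⟨2, hI2mem 0 2 (by norm_num) (by norm_num)⟩
  have hI1ne : I1.Nonempty := ⟨2, hI1mem 0 2 (by norm_num) (by norm_num)⟩
  constructor
  · ext y
    simp only [hI1, hI2, hP, Set.mem_inter_iff, Set.mem_iUnion, Set.mem_Icc, Set.mem_setOf_eq]
    constructor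
    · rintro ⟨⟨n, hn1, hn2⟩, ⟨m, hm1, hm2⟩⟩
      have h1 : 2*m+1 ≤ 2*n+1 := tp_le_iff.mp (le_trans hm1 hn2)
      have h2 : 2*n ≤ 2*m+2 := tp_le_iff.mp (le_trans hn1 hm2)
      have : n = m ∨ n = m + 1 := by omega
      rcases this with rfl | rfl
      · exact ⟨2*n+1, by omega, le_antisymm hn2 hm1⟩
      · refine ⟨2*m+2, by omega, le_antisymm hm2 ?_⟩
        have : 2*m+2 ≤ 2*(m+1) := by omega
        exact le_trans (tp_le this) hn1
    · rintro ⟨k, hk, rfl⟩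
      rcases Nat.even_or_odd k with ⟨j, hj⟩ | ⟨j, hj⟩
      · have hj1 : 1 ≤ j := by omega
        refine ⟨⟨j, tp_le (by omega), tp_le (by omega)⟩,
          ⟨j - 1, tp_le (by omega), tp_le (by omega)⟩⟩
      · exact ⟨⟨j, tp_le (by omega), tp_le (by omega)⟩,
          ⟨j, tp_le (by omega), tp_le (by omega)⟩⟩
  · intro x hx
    have hx1 : (1:ℝ) ≤ x := hx
    obtain ⟨m, hm1, hm2⟩ := exists_pow_sandwich hx1
    rcases Nat.even_or_odd m with ⟨j, hj⟩ | ⟨j, hj⟩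
    · -- m even : x ∈ I1, compare with I2
      refine le_trans ?_ (le_max_right _ _)
      rcases Nat.eq_zero_or_pos m with rfl | hmpos
      · -- m = 0 : x ∈ [1,2], nearest power is 2
        have hxle2 : x ≤ 2 := by simpa using hm2
        have h1 : infDist x P ≤ 2 - x := by
          have h2P : (2:ℝ) ∈ P := ⟨1, le_refl 1, by norm_num⟩
          calc infDist x P ≤ dist x 2 := infDist_le_dist_of_mem h2P
            _ = 2 - x := by rw [Real.dist_eq, abs_of_nonpos (by linarith)]; ring
        refine h1.trans (le_infDist' hI2ne ?_)
        intro y hy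
        obtain ⟨n, hn1, hn2⟩ := by simpa only [hI2, Set.mem_iUnion, Set.mem_Icc] using hy
        have hy2 : (2:ℝ) ≤ y := le_trans (by simpa using tp_le (show 1 ≤ 2*n+1 by omega)) hn1
        rw [Real.dist_eq]
        have := abs_sub_abs_le_abs_sub y x
        rw [abs_sub_comm]
        calc 2 - x ≤ y - x := by linarith
          _ ≤ |y - x| := le_abs_self _
      · -- m ≥ 1 : both 2^m and 2^(m+1) are powers with exponent ≥ 1
        have hmP : (2:ℝ)^m ∈ P := ⟨m, hmpos, rfl⟩
        have hm1P : (2:ℝ)^(m+1) ∈ P := ⟨m+1, by omega, rfl⟩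
        have h1 : infDist x P ≤ min (x - 2^m) (2^(m+1) - x) := by
          rcases le_total (x - 2^m) (2^(m+1) - x) with h | h
          · rw [min_eq_left h]
            calc infDist x P ≤ dist x (2^m) := infDist_le_dist_of_mem hmP
              _ = x - 2^m := by rw [Real.dist_eq, abs_of_nonneg (by linarith)]
          · rw [min_eq_right h]
            calc infDist x P ≤ dist x (2^(m+1)) := infDist_le_dist_of_mem hm1P
              _ = 2^(m+1) - x := by
                  rw [Real.dist_eq, abs_of_nonpos (by linarith)]; ring
        refine h1.trans (le_infDist' hI2ne ?_)
        intro y hy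
        obtain ⟨n, hn1, hn2⟩ := by simpa only [hI2, Set.mem_iUnion, Set.mem_Icc] using hy
        rw [Real.dist_eq]
        have hcase : 2*n+2 ≤ m ∨ m+1 ≤ 2*n+1 := by omega
        rcases hcase with h | h
        · have : y ≤ 2^m := le_trans hn2 (tp_le h)
          calc min (x - 2^m) (2^(m+1) - x) ≤ x - 2^m := min_le_left _ _
            _ ≤ x - y := by linarith
            _ ≤ |x - y| := le_abs_self _
        · have : (2:ℝ)^(m+1) ≤ y := le_trans (tp_le h) hn1
          calc min (x - 2^m) (2^(m+1) - x) ≤ 2^(m+1) - x := min_le_right _ _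
            _ ≤ y - x := by linarith
            _ ≤ |x - y| := by rw [abs_sub_comm]; exact le_abs_self _
    · -- m odd : x ∈ I2, compare with I1
      refine le_trans ?_ (le_max_left _ _)
      have hmpos : 1 ≤ m := by omega
      have hmP : (2:ℝ)^m ∈ P := ⟨m, hmpos, rfl⟩
      have hm1P : (2:ℝ)^(m+1) ∈ P := ⟨m+1, by omega, rfl⟩
      have h1 : infDist x P ≤ min (x - 2^m) (2^(m+1) - x) := by
        rcases le_total (x - 2^m) (2^(m+1) - x) with h | h
        · rw [min_eq_left h]
          calc infDist x P ≤ dist x (2^m) := infDist_le_dist_of_mem hmP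
            _ = x - 2^m := by rw [Real.dist_eq, abs_of_nonneg (by linarith)]
        · rw [min_eq_right h]
          calc infDist x P ≤ dist x (2^(m+1)) := infDist_le_dist_of_mem hm1P
            _ = 2^(m+1) - x := by
                rw [Real.dist_eq, abs_of_nonpos (by linarith)]; ring
      refine h1.trans (le_infDist' hI1ne ?_)
      intro y hy
      obtain ⟨n, hn1, hn2⟩ := by simpa only [hI1, Set.mem_iUnion, Set.mem_Icc] using hy
      rw [Real.dist_eq]
      have hcase : 2*n+1 ≤ m ∨ m+1 ≤ 2*n := by omega
      rcases hcase with h | h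
      · have : y ≤ 2^m := le_trans hn2 (tp_le h)
        calc min (x - 2^m) (2^(m+1) - x) ≤ x - 2^m := min_le_left _ _
          _ ≤ x - y := by linarith
          _ ≤ |x - y| := le_abs_self _
      · have : (2:ℝ)^(m+1) ≤ y := le_trans (tp_le (by omega : m+1 ≤ 2*n)) hn1
        calc min (x - 2^m) (2^(m+1) - x) ≤ 2^(m+1) - x := min_le_right _ _
          _ ≤ y - x := by linarith
          _ ≤ |x - y| := by rw [abs_sub_comm]; exact le_abs_self _
end

section
/- Let I₁ = ⋃_{n ∈ ℕ} [2^{2n}, 2^{2n+1}] ⊆ ℝ and define u : I₁ → ℝ by u(t) = 2^{2n+1} when t ∈ [2^{2n}, 2^{2n+1}]. Then |u(t) − u(t′)| ≤ 4|t − t′| for all t, t′ ∈ I₁. In particular u is a 4-Lipschitz retraction of I₁ onto {2^{2n+1} : n ∈ ℕ}. -/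
lemma collapse_aux (n m : ℕ) (t t' : ℝ) (hnm : n ≤ m)
    (ht : t ∈ Set.Icc ((2 : ℝ) ^ (2 * n)) ((2 : ℝ) ^ (2 * n + 1)))
    (ht' : t' ∈ Set.Icc ((2 : ℝ) ^ (2 * m)) ((2 : ℝ) ^ (2 * m + 1))) :
    |(2 : ℝ) ^ (2 * n + 1) - 2 ^ (2 * m + 1)| ≤ 4 * |t - t'| := by
  rcases eq_or_lt_of_le hnm with rfl | hlt
  · simp [abs_nonneg]
  · have h1 : (2 : ℝ) ^ (2 * n + 2) ≤ 2 ^ (2 * m) := by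
      apply pow_le_pow_right₀ (by norm_num)
      omega
    have e1 : (2 : ℝ) ^ (2 * n + 1) = 2 * 2 ^ (2 * n) := by ring
    have e2 : (2 : ℝ) ^ (2 * n + 2) = 4 * 2 ^ (2 * n) := by ring
    have e3 : (2 : ℝ) ^ (2 * m + 1) = 2 * 2 ^ (2 * m) := by ring
    obtain ⟨ht1, ht2⟩ := ht
    obtain ⟨ht1', ht2'⟩ := ht'
    have hpos : (0:ℝ) < 2 ^ (2 * n) := by positivity
    have htt : t < t' := by nlinarith
    rw [abs_of_nonpos (by nlinarith), abs_of_neg (by linarith)]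
    nlinarith

theorem collapse_to_top_lipschitz (u : ℝ → ℝ)
    (hu : ∀ n : ℕ, ∀ t ∈ Set.Icc ((2 : ℝ) ^ (2 * n)) ((2 : ℝ) ^ (2 * n + 1)),
      u t = 2 ^ (2 * n + 1)) :
    ∀ t ∈ ⋃ n : ℕ, Set.Icc ((2 : ℝ) ^ (2 * n)) ((2 : ℝ) ^ (2 * n + 1)),
      ∀ t' ∈ ⋃ n : ℕ, Set.Icc ((2 : ℝ) ^ (2 * n)) ((2 : ℝ) ^ (2 * n + 1)),
        |u t - u t'| ≤ 4 * |t - t'| := by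
  intro t ht t' ht'
  obtain ⟨n, hn⟩ := Set.mem_iUnion.1 ht
  obtain ⟨m, hm⟩ := Set.mem_iUnion.1 ht'
  rw [hu n t hn, hu m t' hm]
  rcases le_total n m with h | h
  · exact collapse_aux n m t t' h hn hm
  · rw [abs_sub_comm, abs_sub_comm t t']
    exact collapse_aux m n t' t h hm hn
end

section
/- Let I₁ = ⋃_{n ∈ ℕ} [2^{2n}, 2^{2n+1}] ⊆ ℝ and define h : I₁ × [0, 1] → I₁ by h(t, s) = s·t + (1 − s)·2^{2n+1} for t ∈ [2^{2n}, 2^{2n+1}]. Then h is well-defined (h(t, s) ∈ I₁), continuous, h(t, 1) = t, h(t, 0) = 2^{2n+1} for t ∈ [2^{2n}, 2^{2n+1}], and the family {h(·, s)}_{s ∈ [0,1]} is equi-Lipschitz: |h(t, s) − h(t′, s)| ≤ 4|t − t′| for all t, t′ ∈ I₁ and all s ∈ [0, 1]. -/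
open Set Topology Filter

private lemma hmem_aux (t s : ℝ) (n : ℕ)
    (ht : t ∈ Set.Icc ((2 : ℝ) ^ (2 * n)) ((2 : ℝ) ^ (2 * n + 1)))
    (hs : s ∈ Set.Icc (0 : ℝ) 1) :
    s * t + (1 - s) * 2 ^ (2 * n + 1) ∈
      Set.Icc ((2 : ℝ) ^ (2 * n)) ((2 : ℝ) ^ (2 * n + 1)) := by
  obtain ⟨hs0, hs1⟩ := hs
  obtain ⟨ht1, ht2⟩ := ht
  have hE : (2 : ℝ) ^ (2 * n) ≤ (2 : ℝ) ^ (2 * n + 1) :=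
    pow_le_pow_right₀ one_le_two (Nat.le_succ _)
  constructor
  · nlinarith
  · nlinarith

/-- Separation of the intervals: if two points of the union are close, they lie in
the same interval. -/
private lemma same_interval (n m : ℕ) (t t' : ℝ)
    (ht : t ∈ Set.Icc ((2 : ℝ) ^ (2 * n)) ((2 : ℝ) ^ (2 * n + 1)))
    (ht' : t' ∈ Set.Icc ((2 : ℝ) ^ (2 * m)) ((2 : ℝ) ^ (2 * m + 1)))
    (hd : |t' - t| < (2 : ℝ) ^ (2 * n) / 2) : m = n := by
  rcases lt_trichotomy m n with hmn | hmn | hmn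
  · exfalso
    have h1 : (2 : ℝ) ^ (2 * m + 2) ≤ (2 : ℝ) ^ (2 * n) :=
      pow_le_pow_right₀ one_le_two (by omega)
    have := abs_lt.mp hd
    have ht'2 : t' ≤ 2 ^ (2 * m + 1) := ht'.2
    have ht1 : (2 : ℝ) ^ (2 * n) ≤ t := ht.1
    have hpow : (2 : ℝ) ^ (2 * m + 2) = 2 * 2 ^ (2 * m + 1) := by ring
    nlinarith
  · exact hmn
  · exfalso
    have h1 : (2 : ℝ) ^ (2 * n + 2) ≤ (2 : ℝ) ^ (2 * m) :=
      pow_le_pow_right₀ one_le_two (by omega)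
    have := abs_lt.mp hd
    have ht2 : t ≤ 2 ^ (2 * n + 1) := ht.2
    have ht'1 : (2 : ℝ) ^ (2 * m) ≤ t' := ht'.1
    have hpow : (2 : ℝ) ^ (2 * n + 2) = 2 * 2 ^ (2 * n + 1) := by ring
    have hpow1 : (2 : ℝ) ^ (2 * n + 1) = 2 * 2 ^ (2 * n) := by ring
    nlinarith

private lemma lip_lt (h : ℝ → ℝ → ℝ)
    (hh : ∀ n : ℕ, ∀ t ∈ Set.Icc ((2 : ℝ) ^ (2 * n)) ((2 : ℝ) ^ (2 * n + 1)),
      ∀ s ∈ Set.Icc (0 : ℝ) 1, h t s = s * t + (1 - s) * 2 ^ (2 * n + 1))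
    (n m : ℕ) (hnm : n < m) (s : ℝ) (hs : s ∈ Set.Icc (0 : ℝ) 1) (t t' : ℝ)
    (ht : t ∈ Set.Icc ((2 : ℝ) ^ (2 * n)) ((2 : ℝ) ^ (2 * n + 1)))
    (ht' : t' ∈ Set.Icc ((2 : ℝ) ^ (2 * m)) ((2 : ℝ) ^ (2 * m + 1))) :
    |h t s - h t' s| ≤ 4 * |t - t'| := by
  have ha : h t s ∈ Set.Icc ((2 : ℝ) ^ (2 * n)) ((2 : ℝ) ^ (2 * n + 1)) := by
    rw [hh n t ht s hs]; exact hmem_aux t s n ht hs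
  have hb : h t' s ∈ Set.Icc ((2 : ℝ) ^ (2 * m)) ((2 : ℝ) ^ (2 * m + 1)) := by
    rw [hh m t' ht' s hs]; exact hmem_aux t' s m ht' hs
  have h1 : (2 : ℝ) ^ (2 * n + 2) ≤ (2 : ℝ) ^ (2 * m) :=
    pow_le_pow_right₀ one_le_two (by omega)
  have hpow : (2 : ℝ) ^ (2 * n + 2) = 2 * 2 ^ (2 * n + 1) := by ring
  have hpowm : (2 : ℝ) ^ (2 * m + 1) = 2 * 2 ^ (2 * m) := by ring
  have hposn : (0 : ℝ) < 2 ^ (2 * n) := by positivity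
  have hposn1 : (0 : ℝ) < 2 ^ (2 * n + 1) := by positivity
  have hposm : (0 : ℝ) < 2 ^ (2 * m) := by positivity
  -- t' - t ≥ 2^(2m) / 2
  have hgap : (2 : ℝ) ^ (2 * m) / 2 ≤ t' - t := by
    have := ht.2; have := ht'.1; nlinarith
  have hba : h t s ≤ h t' s := by
    have := ha.2; have := hb.1; nlinarith
  have habs : |h t s - h t' s| = h t' s - h t s := by
    rw [abs_sub_comm]; exact abs_of_nonneg (by linarith)
  have habs2 : |t - t'| = t' - t := by
    rw [abs_sub_comm]; exact abs_of_nonneg (by nlinarith)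
  rw [habs, habs2]
  have := ha.1; have := hb.2
  nlinarith

theorem collapse_homotopy_equi_lipschitz (h : ℝ → ℝ → ℝ)
    (hh : ∀ n : ℕ, ∀ t ∈ Set.Icc ((2 : ℝ) ^ (2 * n)) ((2 : ℝ) ^ (2 * n + 1)),
      ∀ s ∈ Set.Icc (0 : ℝ) 1, h t s = s * t + (1 - s) * 2 ^ (2 * n + 1)) :
    (∀ t ∈ ⋃ n : ℕ, Set.Icc ((2 : ℝ) ^ (2 * n)) ((2 : ℝ) ^ (2 * n + 1)),
      ∀ s ∈ Set.Icc (0 : ℝ) 1,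
        h t s ∈ ⋃ n : ℕ, Set.Icc ((2 : ℝ) ^ (2 * n)) ((2 : ℝ) ^ (2 * n + 1))) ∧
    ContinuousOn (fun p : ℝ × ℝ => h p.1 p.2)
      ((⋃ n : ℕ, Set.Icc ((2 : ℝ) ^ (2 * n)) ((2 : ℝ) ^ (2 * n + 1))) ×ˢ Set.Icc (0 : ℝ) 1) ∧
    (∀ t ∈ ⋃ n : ℕ, Set.Icc ((2 : ℝ) ^ (2 * n)) ((2 : ℝ) ^ (2 * n + 1)), h t 1 = t) ∧
    (∀ n : ℕ, ∀ t ∈ Set.Icc ((2 : ℝ) ^ (2 * n)) ((2 : ℝ) ^ (2 * n + 1)),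
      h t 0 = 2 ^ (2 * n + 1)) ∧
    (∀ s ∈ Set.Icc (0 : ℝ) 1,
      ∀ t ∈ ⋃ n : ℕ, Set.Icc ((2 : ℝ) ^ (2 * n)) ((2 : ℝ) ^ (2 * n + 1)),
        ∀ t' ∈ ⋃ n : ℕ, Set.Icc ((2 : ℝ) ^ (2 * n)) ((2 : ℝ) ^ (2 * n + 1)),
          |h t s - h t' s| ≤ 4 * |t - t'|) := by
  refine ⟨?_, ?_, ?_, ?_, ?_⟩
  · -- membership
    intro t ht s hs
    obtain ⟨_, ⟨n, rfl⟩, htn⟩ := ht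
    exact Set.mem_iUnion.mpr ⟨n, by rw [hh n t htn s hs]; exact hmem_aux t s n htn hs⟩
  · -- continuity
    intro p hp
    obtain ⟨hp1, hp2⟩ := hp
    obtain ⟨_, ⟨n, rfl⟩, hpn⟩ := hp1
    have hcont : ContinuousWithinAt
        (fun q : ℝ × ℝ => q.2 * q.1 + (1 - q.2) * 2 ^ (2 * n + 1))
        ((⋃ n : ℕ, Set.Icc ((2 : ℝ) ^ (2 * n)) ((2 : ℝ) ^ (2 * n + 1))) ×ˢ Set.Icc (0 : ℝ) 1)
        p := ((continuous_snd.mul continuous_fst).add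
          ((continuous_const.sub continuous_snd).mul continuous_const)).continuousWithinAt
    have hδ : (0 : ℝ) < 2 ^ (2 * n) / 2 := by positivity
    have hball : Metric.ball p.1 ((2 : ℝ) ^ (2 * n) / 2) ×ˢ (Set.univ : Set ℝ) ∈ 𝓝 p :=
      prod_mem_nhds (Metric.ball_mem_nhds _ hδ) Filter.univ_mem
    have hmem : (Metric.ball p.1 ((2 : ℝ) ^ (2 * n) / 2) ×ˢ (Set.univ : Set ℝ)) ∩
        ((⋃ n : ℕ, Set.Icc ((2 : ℝ) ^ (2 * n)) ((2 : ℝ) ^ (2 * n + 1))) ×ˢ Set.Icc (0 : ℝ) 1)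
        ∈ nhdsWithin p
          ((⋃ n : ℕ, Set.Icc ((2 : ℝ) ^ (2 * n)) ((2 : ℝ) ^ (2 * n + 1))) ×ˢ Set.Icc (0 : ℝ) 1) :=
      Filter.inter_mem (mem_nhdsWithin_of_mem_nhds hball) self_mem_nhdsWithin
    have hev : (fun p : ℝ × ℝ => h p.1 p.2) =ᶠ[nhdsWithin p
        ((⋃ n : ℕ, Set.Icc ((2 : ℝ) ^ (2 * n)) ((2 : ℝ) ^ (2 * n + 1))) ×ˢ Set.Icc (0 : ℝ) 1)]
        (fun q : ℝ × ℝ => q.2 * q.1 + (1 - q.2) * 2 ^ (2 * n + 1)) := by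
      refine Filter.eventuallyEq_of_mem hmem ?_
      rintro q ⟨⟨hqb, -⟩, hq1, hq2⟩
      obtain ⟨_, ⟨m, rfl⟩, hqm⟩ := hq1
      have hmn : m = n := by
        apply same_interval n m p.1 q.1 hpn hqm
        simpa [Real.dist_eq] using hqb
      subst hmn
      exact hh m q.1 hqm q.2 hq2
    exact hcont.congr_of_eventuallyEq hev (hh n p.1 hpn p.2 hp2)
  · -- h t 1 = t
    intro t ht
    obtain ⟨_, ⟨n, rfl⟩, htn⟩ := ht
    rw [hh n t htn 1 (by norm_num)]; ring
  · -- h t 0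
    intro n t htn
    rw [hh n t htn 0 (by norm_num)]; ring
  · -- Lipschitz
    intro s hs t ht t' ht'
    obtain ⟨_, ⟨n, rfl⟩, htn⟩ := ht
    obtain ⟨_, ⟨m, rfl⟩, htm⟩ := ht'
    rcases lt_trichotomy n m with hnm | hnm | hnm
    · exact lip_lt h hh n m hnm s hs t t' htn htm
    · subst hnm
      rw [hh n t htn s hs, hh n t' htm s hs]
      have : s * t + (1 - s) * 2 ^ (2 * n + 1) - (s * t' + (1 - s) * 2 ^ (2 * n + 1))
          = s * (t - t') := by ring
      rw [this, abs_mul, abs_of_nonneg hs.1]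
      nlinarith [abs_nonneg (t - t'), hs.2]
    · rw [abs_sub_comm, abs_sub_comm t t']
      exact lip_lt h hh m n hnm s hs t' t htm htn
end

section
/- Let H₁, H₂ be Hilbert spaces, t ∈ B(H₁) a compact operator, and s ∈ B(H₂) an operator such that s·M_g and M_g·s are compact for every g ∈ C₀(ℝ), where M_g denotes multiplication on H₂ = L²([1,∞)). Then for every f ∈ C₀(M × [1,∞)) (M a compact metric measure space, H₁ = L²(M)), both (t ⊗ s)·M_f and M_f·(t ⊗ s) are compact operators on H₁ ⊗ H₂ ≅ L²(M × [1,∞)). -/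
open scoped ZeroAtInfty
open Filter Set Topology

lemma aux_compact_slab (T : ℝ) : IsCompact {x : {t : ℝ // 1 ≤ t} | (x : ℝ) ≤ T} := by
  have h1 : IsProperMap ((↑) : {t : ℝ // 1 ≤ t} → ℝ) :=
    (isClosed_Ici (a := (1:ℝ))).isProperMap_subtypeVal
  have h2 : {x : {t : ℝ // 1 ≤ t} | (x : ℝ) ≤ T} = Subtype.val ⁻¹' (Set.Icc 1 T) := by
    ext x; simp [x.2]
  rw [h2]
  exact h1.isCompact_preimage isCompact_Icc

lemma aux_factor {M : Type*} [MetricSpace M] [CompactSpace M]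
    (f : C₀(M × {t : ℝ // 1 ≤ t}, ℂ)) :
    ∃ (g : C₀({t : ℝ // 1 ≤ t}, ℂ)) (f' : C₀(M × {t : ℝ // 1 ≤ t}, ℂ)),
      (∀ x, g x ≠ 0) ∧ ∀ p, f p = g p.2 * f' p := by
  set I := {t : ℝ // 1 ≤ t}
  let cf : C(I × M, ℂ) := (f : C(M × I, ℂ)).comp ContinuousMap.prodSwap
  let cur : C(I, C(M, ℂ)) := cf.curry
  let F : I → ℝ := fun x => ‖cur x‖
  have hFcont : Continuous F := (map_continuous cur).norm
  have hF0 : ∀ x, 0 ≤ F x := fun x => norm_nonneg _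
  have hcur : ∀ (m : M) (x : I), cur x m = f (m, x) := fun m x => rfl
  have hFge : ∀ (m : M) (x : I), ‖f (m, x)‖ ≤ F x := fun m x => by
    simpa [hcur] using (cur x).norm_coe_le_norm m
  set G : I → ℝ := fun x => F x + (x : ℝ)⁻¹ with hG
  have hxpos : ∀ x : I, (0:ℝ) < (x:ℝ) := fun x => lt_of_lt_of_le one_pos x.2
  have hGpos : ∀ x, 0 < G x := fun x =>
    add_pos_of_nonneg_of_pos (hF0 x) (inv_pos.2 (hxpos x))
  have hGcont : Continuous G :=
    hFcont.add (continuous_subtype_val.inv₀ fun x => (hxpos x).ne')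
  have hsqpos : ∀ x, 0 < Real.sqrt (G x) := fun x => Real.sqrt_pos.2 (hGpos x)
  -- smallness at infinity
  have hsmall : ∀ ε > (0:ℝ), ∃ T : ℝ, ∀ x : I, T < (x:ℝ) → Real.sqrt (G x) < ε := by
    intro ε hε
    have hε2 : (0:ℝ) < ε ^ 2 / 4 := by positivity
    have hfinf : Tendsto f (cocompact (M × I)) (𝓝 0) := zero_at_infty f
    have hmem : {p : M × I | ‖f p‖ < ε ^ 2 / 4} ∈ cocompact (M × I) := by
      have := Metric.tendsto_nhds.mp hfinf _ hε2
      simp only [dist_zero_right] at this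
      exact this
    obtain ⟨K, hKc, hKsub⟩ := mem_cocompact.mp hmem
    obtain ⟨T₀, hT₀⟩ := ((hKc.image continuous_snd).image continuous_subtype_val).bddAbove
    refine ⟨max T₀ (4 / ε ^ 2), fun x hx => ?_⟩
    have hxT₀ : T₀ < (x:ℝ) := lt_of_le_of_lt (le_max_left _ _) hx
    have hnotK : ∀ m : M, (m, x) ∉ K := by
      intro m hm
      exact absurd (hT₀ ⟨x, ⟨(m, x), hm, rfl⟩, rfl⟩) (not_le.2 hxT₀)
    have hFx : F x ≤ ε ^ 2 / 4 := by
      refine (ContinuousMap.norm_le _ hε2.le).mpr fun m => ?_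
      have := hKsub (hnotK m)
      simpa [hcur] using le_of_lt this
    have hinv : ((x:ℝ))⁻¹ < ε ^ 2 / 2 := by
      have h4 : 4 / ε ^ 2 < (x:ℝ) := lt_of_le_of_lt (le_max_right _ _) hx
      have hx4 : (0:ℝ) < 4 / ε ^ 2 := by positivity
      have := inv_strictAnti₀ hx4 h4
      calc ((x:ℝ))⁻¹ < (4 / ε ^ 2)⁻¹ := this
        _ = ε ^ 2 / 4 := by field_simp
        _ < ε ^ 2 / 2 := by nlinarith
    have hGx : G x < ε ^ 2 := by
      have h := add_lt_add_of_le_of_lt hFx hinv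
      have hGeq : G x = F x + ((x:ℝ))⁻¹ := rfl
      rw [hGeq]
      nlinarith [pow_pos hε 2]
    calc Real.sqrt (G x) < Real.sqrt (ε ^ 2) := Real.sqrt_lt_sqrt (hGpos x).le hGx
      _ = ε := by rw [Real.sqrt_sq hε.le]
  -- the C₀ function g
  refine ⟨⟨⟨fun x => ((Real.sqrt (G x) : ℝ) : ℂ), Complex.continuous_ofReal.comp (Real.continuous_sqrt.comp hGcont)⟩, ?_⟩,
    ⟨⟨fun p => f p / ((Real.sqrt (G p.2) : ℝ) : ℂ), ?_⟩, ?_⟩, ?_, ?_⟩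
  · -- zero at infinity for g
    rw [Metric.tendsto_nhds]
    intro ε hε
    obtain ⟨T, hT⟩ := hsmall ε hε
    rw [(Filter.hasBasis_cocompact).eventually_iff]
    refine ⟨{x : I | (x:ℝ) ≤ T}, aux_compact_slab T, fun x hx => ?_⟩
    have hxT : T < (x:ℝ) := not_le.mp hx
    have : ‖((Real.sqrt (G x) : ℝ) : ℂ)‖ = Real.sqrt (G x) := by
      rw [Complex.norm_real, Real.norm_of_nonneg (Real.sqrt_nonneg _)]
    simpa [dist_zero_right, this, abs_of_nonneg (Real.sqrt_nonneg (G x))] using hT x hxT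
  · -- continuity of f'
    exact (map_continuous f).div
      ((Complex.continuous_ofReal.comp (Real.continuous_sqrt.comp hGcont)).comp
        continuous_snd) fun p =>
      Complex.ofReal_ne_zero.2 (hsqpos p.2).ne'
  · -- zero at infinity for f'
    rw [Metric.tendsto_nhds]
    intro ε hε
    obtain ⟨T, hT⟩ := hsmall ε hε
    rw [(Filter.hasBasis_cocompact).eventually_iff]
    refine ⟨Set.univ ×ˢ {x : I | (x:ℝ) ≤ T}, isCompact_univ.prod (aux_compact_slab T),
      fun p hp => ?_⟩
    have hp2 : T < (p.2 : ℝ) := by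
      by_contra h
      exact hp ⟨trivial, not_lt.mp h⟩
    have hnorm : ‖f p / ((Real.sqrt (G p.2) : ℝ) : ℂ)‖ ≤ Real.sqrt (G p.2) := by
      rw [norm_div, Complex.norm_real, Real.norm_of_nonneg (Real.sqrt_nonneg _),
        div_le_iff₀ (hsqpos p.2)]
      rw [Real.mul_self_sqrt (hGpos p.2).le]
      calc ‖f p‖ ≤ F p.2 := by
            have := hFge p.1 p.2
            simpa using this
        _ ≤ G p.2 := le_add_of_nonneg_right (inv_pos.2 (hxpos p.2)).le
    simp only [dist_zero_right]
    exact lt_of_le_of_lt hnorm (hT p.2 hp2)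
  · exact fun x => Complex.ofReal_ne_zero.2 (hsqpos x).ne'
  · intro p
    have hne : ((Real.sqrt (G p.2) : ℝ) : ℂ) ≠ 0 := Complex.ofReal_ne_zero.2 (hsqpos p.2).ne'
    show f p = ((Real.sqrt (G p.2) : ℝ) : ℂ) * (f p / ((Real.sqrt (G p.2) : ℝ) : ℂ))
    rw [mul_comm, div_mul_cancel₀ _ hne]

theorem tensor_with_locally_compact_is_locally_compact
    {M : Type*} [MetricSpace M] [CompactSpace M]
    {H₁ H₂ H : Type*}
    [NormedAddCommGroup H₁] [InnerProductSpace ℂ H₁] [CompleteSpace H₁]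
    [NormedAddCommGroup H₂] [InnerProductSpace ℂ H₂] [CompleteSpace H₂]
    [NormedAddCommGroup H] [InnerProductSpace ℂ H] [CompleteSpace H]
    -- the Hilbert space tensor product structure H ≅ H₁ ⊗ H₂
    (tensor : (H₁ →L[ℂ] H₁) → (H₂ →L[ℂ] H₂) → (H →L[ℂ] H))
    (htensor_comp : ∀ a b c d, tensor (a.comp c) (b.comp d) = (tensor a b).comp (tensor c d))
    (htensor_compact : ∀ (a : H₁ →L[ℂ] H₁) (b : H₂ →L[ℂ] H₂), IsCompactOperator a → IsCompactOperator b →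
      IsCompactOperator (tensor a b))
    -- the representation of C₀(M × [1,∞)) by pointwise multiplication on H ≅ L²(M × [1,∞))
    (ρ : C₀(M × {t : ℝ // 1 ≤ t}, ℂ) → (H →L[ℂ] H))
    (hρmul : ∀ f g, ρ (f * g) = (ρ f).comp (ρ g))
    (hρnorm : ∀ f, ‖ρ f‖ ≤ ‖f‖)
    -- the representation of C₀([1,∞)) by pointwise multiplication on H₂ ≅ L²([1,∞))
    (σ : C₀({t : ℝ // 1 ≤ t}, ℂ) → (H₂ →L[ℂ] H₂))
    -- the embedding g ↦ 1 ⊗ g of C₀([1,∞)) into C₀(M × [1,∞)) and its compatibility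
    (oT : C₀({t : ℝ // 1 ≤ t}, ℂ) → C₀(M × {t : ℝ // 1 ≤ t}, ℂ))
    (hoT : ∀ g p, oT g p = g p.2)
    (hcompat : ∀ g, ρ (oT g) = tensor (ContinuousLinearMap.id ℂ H₁) (σ g))
    -- t is compact, s is locally compact with respect to σ
    (t : H₁ →L[ℂ] H₁) (ht : IsCompactOperator t)
    (s : H₂ →L[ℂ] H₂)
    (hs : ∀ g : C₀({t : ℝ // 1 ≤ t}, ℂ),
      IsCompactOperator (s.comp (σ g)) ∧ IsCompactOperator ((σ g).comp s)) :
    ∀ f : C₀(M × {t : ℝ // 1 ≤ t}, ℂ),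
      IsCompactOperator ((tensor t s).comp (ρ f)) ∧
      IsCompactOperator ((ρ f).comp (tensor t s)) := by
  intro f
  obtain ⟨g, f', hgne, hfac⟩ := aux_factor f
  have hf : f = oT g * f' := by
    ext p
    rw [show (oT g * f') p = oT g p * f' p from rfl, hoT]
    exact hfac p
  constructor
  · have key : (tensor t s).comp (ρ f) = (tensor t (s.comp (σ g))).comp (ρ f') := by
      rw [hf, hρmul, hcompat, ← ContinuousLinearMap.comp_assoc, ← htensor_comp,
        ContinuousLinearMap.comp_id]
    rw [key]
    have h1 : IsCompactOperator (tensor t (s.comp (σ g))) :=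
      htensor_compact _ _ ht (hs g).1
    simpa [ContinuousLinearMap.coe_comp'] using h1.comp_clm (ρ f')
  · have key : (ρ f).comp (tensor t s) = (ρ f').comp (tensor t ((σ g).comp s)) := by
      have hf2 : f = f' * oT g := by rw [hf, mul_comm]
      rw [hf2, hρmul, hcompat, ContinuousLinearMap.comp_assoc, ← htensor_comp,
        ContinuousLinearMap.id_comp]
    rw [key]
    have h1 : IsCompactOperator (tensor t ((σ g).comp s)) :=
      htensor_compact _ _ ht (hs g).2
    simpa [ContinuousLinearMap.coe_comp'] using h1.clm_comp (ρ f')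
end

section
/- Let G be an abelian group. Consider the directed system (∏_{k ≥ n} G)_{n ∈ ℕ} with structure maps φ_{n,m}((a_k)_{k ≥ n}) = (Σ_{k=n}^{m} a_k, a_{m+1}, …) for n ≤ m. Let K ⊆ ∏_{k ∈ ℕ} G be the subgroup of finitely supported sequences whose coordinates sum to 0. Then the colimit of this system is isomorphic to (∏_{k ∈ ℕ} G)/K, via the maps induced by extending a sequence in ∏_{k ≥ n} G by zeros in coordinates k < n. -/
/-- The structure map `φ_{n,m} : ∏_{k ≥ n} G → ∏_{k ≥ m} G` which adds up the
coordinates between `n` and `m` and keeps the remaining ones. -/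
def phiStruct {G : Type*} [AddCommGroup G] (n m : ℕ) (h : n ≤ m)
    (a : {k : ℕ // n ≤ k} → G) : {k : ℕ // m ≤ k} → G :=
  fun k =>
    if k.1 = m then ∑ i ∈ Finset.range (m + 1 - n), a ⟨n + i, Nat.le_add_right n i⟩
    else a ⟨k.1, h.trans k.2⟩

/-- The subgroup of `∏_{k ∈ ℕ} G` of finitely supported sequences whose coordinates sum
to `0`. -/
def sumZeroFinSupp (G : Type*) [AddCommGroup G] : AddSubgroup (ℕ → G) where
  carrier := {a | (Function.support a).Finite ∧ ∑ᶠ k, a k = 0}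
  zero_mem' := by
    constructor
    · simpa using Set.finite_empty
    · simp
  add_mem' := by
    rintro a b ⟨ha, ha0⟩ ⟨hb, hb0⟩
    refine ⟨(ha.union hb).subset (Function.support_add a b), ?_⟩
    have : ∑ᶠ k, (a k + b k) = (∑ᶠ k, a k) + ∑ᶠ k, b k := finsum_add_distrib ha hb
    simpa [ha0, hb0] using this
  neg_mem' := by
    rintro a ⟨ha, ha0⟩
    refine ⟨by simpa [Function.support_neg] using ha, ?_⟩
    have : ∑ᶠ k, (-a) k = -∑ᶠ k, a k := by
      simpa using finsum_neg_distrib (fun k => a k)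
    simpa [ha0] using this

/-- Extension by zero of an element of `∏_{k ≥ n} G` to `∏_{k ∈ ℕ} G`. -/
def extZero {G : Type*} [AddCommGroup G] (n : ℕ) (a : {k : ℕ // n ≤ k} → G) : ℕ → G :=
  fun k => if h : n ≤ k then a ⟨k, h⟩ else 0

/-- Restriction of a full sequence to `{k // 0 ≤ k}`, as an additive hom. -/
def resZero (G : Type*) [AddCommGroup G] : (ℕ → G) →+ ({k : ℕ // 0 ≤ k} → G) where
  toFun a := fun k => a k.1
  map_zero' := rfl
  map_add' _ _ := rfl

lemma extZero_resZero {G : Type*} [AddCommGroup G] (b : ℕ → G) :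
    extZero 0 (resZero G b) = b := by
  funext k
  simp [extZero, resZero]

lemma key_mem {G : Type*} [AddCommGroup G] (n m : ℕ) (h : n ≤ m)
    (a : {k : ℕ // n ≤ k} → G) :
    extZero m (phiStruct n m h a) - extZero n a ∈ sumZeroFinSupp G := by
  set d : ℕ → G := extZero m (phiStruct n m h a) - extZero n a with hd
  have hd0 : ∀ k, k ∉ Finset.Ico n (m + 1) → d k = 0 := by
    intro k hk
    rw [Finset.mem_Ico] at hk
    push_neg at hk
    simp only [hd, Pi.sub_apply, extZero]
    rcases lt_or_ge k n with h1 | h1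
    · rw [dif_neg (by omega), dif_neg (by omega), sub_zero]
    · have hm : m ≤ k := by omega
      have hm' : m < k := by omega
      rw [dif_pos hm, dif_pos h1]
      simp only [phiStruct]
      rw [if_neg (show k ≠ m by omega)]
      exact sub_self _
  have hsupp : Function.support d ⊆ (Finset.Ico n (m + 1) : Finset ℕ) := by
    intro k hk
    by_contra hc
    exact hk (hd0 k (by simpa using hc))
  refine ⟨Set.Finite.subset (Finset.Ico n (m + 1)).finite_toSet hsupp, ?_⟩
  rw [finsum_eq_sum_of_support_subset d hsupp]
  have hsub : ∑ k ∈ Finset.Ico n (m + 1), d k =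
      (∑ k ∈ Finset.Ico n (m + 1), extZero m (phiStruct n m h a) k) -
        ∑ k ∈ Finset.Ico n (m + 1), extZero n a k := by
    simp [hd, Finset.sum_sub_distrib]
  rw [hsub]
  have hA : ∑ k ∈ Finset.Ico n (m + 1), extZero m (phiStruct n m h a) k =
      ∑ i ∈ Finset.range (m + 1 - n), a ⟨n + i, Nat.le_add_right n i⟩ := by
    rw [Finset.sum_eq_single_of_mem m (by simp [Finset.mem_Ico]; omega)]
    · simp [extZero, phiStruct]
    · intro k hk hkm
      rw [Finset.mem_Ico] at hk
      simp only [extZero]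
      rw [dif_neg (by omega)]
  have hB : ∑ k ∈ Finset.Ico n (m + 1), extZero n a k =
      ∑ i ∈ Finset.range (m + 1 - n), a ⟨n + i, Nat.le_add_right n i⟩ := by
    rw [Finset.sum_Ico_eq_sum_range]
    refine Finset.sum_congr rfl fun i _ => ?_
    simp [extZero]
  rw [hA, hB, sub_self]

lemma phiStruct_zero_resZero_extZero {G : Type*} [AddCommGroup G] (n : ℕ)
    (a : {k : ℕ // n ≤ k} → G) :
    phiStruct 0 n (Nat.zero_le n) (resZero G (extZero n a)) = a := by
  funext k
  obtain ⟨kv, hkv⟩ := k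
  rcases eq_or_ne kv n with hk | hk
  · subst hk
    simp only [phiStruct]
    rw [if_pos trivial]
    rw [Finset.sum_eq_single_of_mem kv (by simp)]
    · simp only [resZero, AddMonoidHom.coe_mk, ZeroHom.coe_mk, extZero, Nat.zero_add]
      rw [dif_pos le_rfl]
    · intro i hi hin
      simp only [resZero, AddMonoidHom.coe_mk, ZeroHom.coe_mk, extZero, Nat.zero_add]
      rw [Finset.mem_range] at hi
      rw [dif_neg (by omega)]
  · simp only [phiStruct]
    rw [if_neg hk]
    simp only [resZero, AddMonoidHom.coe_mk, ZeroHom.coe_mk, extZero]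
    rw [dif_pos hkv]
theorem colimit_is_prod_mod_sumZero {G : Type*} [AddCommGroup G] :
    (∀ (n m : ℕ) (h : n ≤ m) (a : {k : ℕ // n ≤ k} → G),
      (QuotientAddGroup.mk (extZero m (phiStruct n m h a)) : (ℕ → G) ⧸ sumZeroFinSupp G) =
        QuotientAddGroup.mk (extZero n a)) ∧
    (∀ (C : Type*) [AddCommGroup C] (θ : ∀ n : ℕ, ({k : ℕ // n ≤ k} → G) →+ C),
      (∀ (n m : ℕ) (h : n ≤ m) (a : {k : ℕ // n ≤ k} → G),
        θ m (phiStruct n m h a) = θ n a) →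
      ∃! u : ((ℕ → G) ⧸ sumZeroFinSupp G) →+ C,
        ∀ (n : ℕ) (a : {k : ℕ // n ≤ k} → G),
          u (QuotientAddGroup.mk (extZero n a)) = θ n a) := by
  constructor
  · intro n m h a
    rw [QuotientAddGroup.eq]
    have := (sumZeroFinSupp G).neg_mem (key_mem n m h a)
    simpa [neg_sub, sub_eq_neg_add] using this
  · intro C _ θ hθ
    have hker : ∀ b ∈ sumZeroFinSupp G, ((θ 0).comp (resZero G)) b = 0 := by
      intro b hb
      obtain ⟨hfin, hsum⟩ := hb
      -- choose m beyond the support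
      obtain ⟨m, hm⟩ : ∃ m, ∀ k, m ≤ k → b k = 0 := by
        refine ⟨hfin.toFinset.sup id + 1, fun k hk => ?_⟩
        by_contra hc
        have : k ∈ hfin.toFinset := by simpa using hc
        have := Finset.le_sup (f := id) this
        simp only [id_eq] at this
        omega
      have hsupp : Function.support b ⊆ (Finset.range (m + 1) : Finset ℕ) := by
        intro k hk
        simp only [Finset.coe_range, Set.mem_Iio]
        by_contra hc
        exact hk (hm k (by omega))
      have hphi : phiStruct 0 m (Nat.zero_le m) (resZero G b) = 0 := by
        funext k
        rcases eq_or_ne k.1 m with hk | hk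
        · rw [phiStruct]
          simp only [hk, if_pos rfl]
          have : ∑ i ∈ Finset.range (m + 1 - 0),
              (resZero G b) ⟨0 + i, Nat.le_add_right 0 i⟩ = ∑ i ∈ Finset.range (m + 1), b i := by
            refine Finset.sum_congr (by norm_num) fun i _ => ?_
            simp [resZero]
        
          rw [this, ← finsum_eq_sum_of_support_subset b hsupp, hsum]
          rfl
        · rw [phiStruct, if_neg hk]
          have : m ≤ k.1 := k.2
          simpa [resZero] using hm k.1 (by omega)
      calc ((θ 0).comp (resZero G)) b = θ m (phiStruct 0 m (Nat.zero_le m) (resZero G b)) :=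
            (hθ 0 m (Nat.zero_le m) (resZero G b)).symm
        _ = 0 := by rw [hphi, map_zero]
    refine ⟨QuotientAddGroup.lift (sumZeroFinSupp G) ((θ 0).comp (resZero G)) hker, ?_, ?_⟩
    · intro n a
      have : QuotientAddGroup.lift (sumZeroFinSupp G) ((θ 0).comp (resZero G)) hker
          (QuotientAddGroup.mk (extZero n a)) = θ 0 (resZero G (extZero n a)) := rfl
      rw [this, ← hθ 0 n (Nat.zero_le n) (resZero G (extZero n a)),
        phiStruct_zero_resZero_extZero]
    · intro u' hu'
      refine AddMonoidHom.ext fun x => ?_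
      induction x using QuotientAddGroup.induction_on with
      | H b =>
        have h1 := hu' 0 (resZero G b)
        rw [extZero_resZero b] at h1
        rw [h1]
        rfl
end
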